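/- Let T be a decision graph satisfying the weak test-once property, δ be an instance assigned class c by T, and δ[X] be the state of variable X in δ. Then the complete reason ∀δ·Δ^c[T] is equivalent to the NNF Γ^c[T] defined inductively by: Γ^c[T] = ⊤ if T is a leaf labeled c; Γ^c[T] = ⊥ if T is a leaf labeled c' ≠ c; and Γ^c[T] = ⋀_j (Γ^c[T_j] ∨ ℓ_j) if T has edges (X,S_j,T_j), where ℓ_j = δ[X] if δ[X] ∈ S_k for some k ≠ j, and ℓ_j = ⊥ otherwise. -/

import Mathlib

/-- A discrete formula over variables `V`, where variable `v` has states `σ v`. -/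
inductive DForm (V : Type) (σ : V → Type) : Type where
  | top : DForm V σ
  | bot : DForm V σ
  | state : (v : V) → σ v → DForm V σ
  | neg : DForm V σ → DForm V σ
  | conj : DForm V σ → DForm V σ → DForm V σ
  | disj : DForm V σ → DForm V σ → DForm V σ

namespace DForm

variable {V : Type} {σ : V → Type}

/-- Evaluation of a discrete formula in a world `w`. -/
def eval [∀ v, DecidableEq (σ v)] (w : ∀ v, σ v) : DForm V σ → Bool
  | top => true
  | bot => false
  | state v s => decide (w v = s)
  | neg φ => !(φ.eval w)
  | conj φ ψ => φ.eval w && ψ.eval w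
  | disj φ ψ => φ.eval w || ψ.eval w

/-- Two formulas are equivalent when they have the same models. -/
def equiv [∀ v, DecidableEq (σ v)] (φ ψ : DForm V σ) : Prop :=
  ∀ w : ∀ v, σ v, φ.eval w = ψ.eval w

/-- `φ ⊨ ψ`: every model of `φ` is a model of `ψ`. -/
def entails [∀ v, DecidableEq (σ v)] (φ ψ : DForm V σ) : Prop :=
  ∀ w : ∀ v, σ v, φ.eval w = true → ψ.eval w = true

/-- Conditioning `Δ|x_i`: replace occurrences of `x_i` by `⊤` and of `x_j` (`j ≠ i`) by `⊥`. -/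
def cond [DecidableEq V] [∀ v, DecidableEq (σ v)] (v : V) (s : σ v) :
    DForm V σ → DForm V σ
  | top => top
  | bot => bot
  | state u t =>
      if h : u = v then (if h ▸ t = s then top else bot) else state u t
  | neg φ => neg (φ.cond v s)
  | conj φ ψ => conj (φ.cond v s) (ψ.cond v s)
  | disj φ ψ => disj (φ.cond v s) (ψ.cond v s)

/-- Universal quantification of state `x_i`:
`∀x_i·Δ := (Δ|x_i) ∧ ⋀_{j≠i} (x_i ∨ Δ|x_j)`. -/
noncomputable def quant [DecidableEq V] [∀ v, DecidableEq (σ v)] [∀ v, Fintype (σ v)]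
    (v : V) (s : σ v) (Δ : DForm V σ) : DForm V σ :=
  ((Finset.univ.filter (fun j => j ≠ s)).toList).foldr
    (fun j acc => conj (disj (state v s) (Δ.cond v j)) acc) (Δ.cond v s)

/-- The set of variables occurring in a formula. -/
def vars : DForm V σ → Set V
  | top => ∅
  | bot => ∅
  | state u _ => {u}
  | neg φ => φ.vars
  | conj φ ψ => φ.vars ∪ ψ.vars
  | disj φ ψ => φ.vars ∪ ψ.vars

/-- Whether state `x_i` (the positive literal) occurs in the formula. -/
def stateOccurs (v : V) (s : σ v) : DForm V σ → Prop
  | top => False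
  | bot => False
  | state u t => ∃ h : u = v, h ▸ t = s
  | neg φ => φ.stateOccurs v s
  | conj φ ψ => φ.stateOccurs v s ∨ ψ.stateOccurs v s
  | disj φ ψ => φ.stateOccurs v s ∨ ψ.stateOccurs v s

/-- An NNF only negates states (literals). -/
def isNNF : DForm V σ → Prop
  | top => True
  | bot => True
  | state _ _ => True
  | neg (state _ _) => True
  | neg _ => False
  | conj φ ψ => φ.isNNF ∧ ψ.isNNF
  | disj φ ψ => φ.isNNF ∧ ψ.isNNF

/-- A positive NNF contains no negation at all. -/
def isPositive : DForm V σ → Prop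
  | top => True
  | bot => True
  | state _ _ => True
  | neg _ => False
  | conj φ ψ => φ.isPositive ∧ ψ.isPositive
  | disj φ ψ => φ.isPositive ∧ ψ.isPositive

/-- A monotone NNF is positive and has at most one state per variable. -/
def monotone (Δ : DForm V σ) : Prop :=
  Δ.isPositive ∧ ∀ (v : V) (s t : σ v), Δ.stateOccurs v s → Δ.stateOccurs v t → s = t

/-- ∨-decomposability: disjuncts of every disjunction share no variables. -/
def orDecomposable : DForm V σ → Prop
  | top => True
  | bot => True
  | state _ _ => True
  | neg φ => φ.orDecomposable
  | conj φ ψ => φ.orDecomposable ∧ ψ.orDecomposable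
  | disj φ ψ => φ.vars ∩ ψ.vars = ∅ ∧ φ.orDecomposable ∧ ψ.orDecomposable

/-- ∧-decomposability: conjuncts of every conjunction share no variables. -/
def andDecomposable : DForm V σ → Prop
  | top => True
  | bot => True
  | state _ _ => True
  | neg φ => φ.andDecomposable
  | conj φ ψ => φ.vars ∩ ψ.vars = ∅ ∧ φ.andDecomposable ∧ ψ.andDecomposable
  | disj φ ψ => φ.andDecomposable ∧ ψ.andDecomposable

end DForm

variable {V : Type} {σ : V → Type}

open DForm

/-- Disjunction of the states in a list: `⋁_{x_k ∈ l} x_k`. -/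
def stateDisj (v : V) : List (σ v) → DForm V σ
  | [] => DForm.bot
  | s :: l => DForm.disj (DForm.state v s) (stateDisj v l)

/-- Conjunction of a list of formulas. -/
def listConj : List (DForm V σ) → DForm V σ
  | [] => DForm.top
  | φ :: l => DForm.conj φ (listConj l)

/-- A decision graph (or tree): leaves are labeled with classes, an internal node
tests a variable `v` and has `n` outgoing edges labeled with sets of states of `v`. -/
inductive DGraph (V : Type) (σ : V → Type) (C : Type) : Type where
  | leaf : C → DGraph V σ C
  | node : (v : V) → (n : ℕ) → (Fin n → Finset (σ v)) → (Fin n → DGraph V σ C) → DGraph V σ C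

namespace DGraph

variable {C : Type}

/-- Classification of an instance by a decision graph: follow the unique edge
whose state set contains the state of the tested variable. -/
def classify [∀ v, DecidableEq (σ v)] (δ : ∀ u, σ u) : DGraph V σ C → Option C
  | .leaf c => some c
  | .node v n sets ch =>
    match (List.finRange n).find? (fun j => decide (δ v ∈ sets j)) with
    | some j => (ch j).classify δ
    | none => none

/-- The weak test-once property, relative to the states still available for each
variable (initially all states): at a node testing `v`, there are at least two
edges and the (nonempty) edge sets partition the available states of `v`; below
the edge `(v, S_j, T_j)` only the states in `S_j` remain available for `v`. -/
def WTO [DecidableEq V] : (∀ u : V, Finset (σ u)) → DGraph V σ C → Prop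
  | _, .leaf _ => True
  | avail, .node v n sets ch =>
      2 ≤ n ∧
      (∀ j, (sets j).Nonempty) ∧
      (∀ j k, j ≠ k → Disjoint (sets j) (sets k)) ∧
      (∀ s : σ v, s ∈ avail v ↔ ∃ j, s ∈ sets j) ∧
      ∀ j, (ch j).WTO (Function.update avail v (sets j))

/-- The NNF `Δ^c[T]` capturing the instances that `T` assigns to class `c`:
`⊤`/`⊥` at leaves, and `⋀_j (Δ^c[T_j] ∨ ⋁_{x_i ∉ S_j} x_i)` at a node with
edges `(X, S_j, T_j)`. -/
noncomputable def deltaNNF [DecidableEq C] [∀ v, DecidableEq (σ v)] [∀ v, Fintype (σ v)]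
    (c : C) : DGraph V σ C → DForm V σ
  | .leaf c' => if c' = c then DForm.top else DForm.bot
  | .node v n sets ch =>
      listConj ((List.finRange n).map (fun j =>
        DForm.disj ((ch j).deltaNNF c) (stateDisj v ((sets j)ᶜ).toList)))

/-- The closed-form complete reason `Γ^c[T]` for instance `δ` and class `c`:
`⊤`/`⊥` at leaves, and `⋀_j (Γ^c[T_j] ∨ ℓ_j)` at a node with edges `(X, S_j, T_j)`,
where `ℓ_j = δ[X]` if `δ[X] ∈ S_k` for some `k ≠ j` and `ℓ_j = ⊥` otherwise. -/
noncomputable def gammaNNF [DecidableEq C] [∀ v, DecidableEq (σ v)] [∀ v, Fintype (σ v)]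
    (δ : ∀ u, σ u) (c : C) : DGraph V σ C → DForm V σ
  | .leaf c' => if c' = c then DForm.top else DForm.bot
  | .node v n sets ch =>
      listConj ((List.finRange n).map (fun j =>
        DForm.disj ((ch j).gammaNNF δ c)
          (if ∃ k, k ≠ j ∧ δ v ∈ sets k then DForm.state v (δ v) else DForm.bot)))

/-- Number of leaves labeled with a class different from `c`. -/
def badLeaves [DecidableEq C] (c : C) : DGraph V σ C → ℕ
  | .leaf c' => if c' = c then 0 else 1
  | .node _ n _ ch => ∑ j : Fin n, (ch j).badLeaves c

end DGraph

/-- The complete reason `∀δ·Δ` for the decision on instance `δ`: universally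
quantify every state of the instance `δ` from `Δ`. -/
noncomputable def completeReason [DecidableEq V] [Fintype V]
    [∀ v, DecidableEq (σ v)] [∀ v, Fintype (σ v)]
    (δ : ∀ u, σ u) (Δ : DForm V σ) : DForm V σ :=
  (Finset.univ : Finset V).toList.foldr (fun v acc => DForm.quant v (δ v) acc) Δ

section Aux

variable {C : Type}

theorem eval_cond [DecidableEq V] [∀ v, DecidableEq (σ v)] (v : V) (s : σ v)
    (Φ : DForm V σ) (w : ∀ u, σ u) :
    (Φ.cond v s).eval w = Φ.eval (Function.update w v s) := by
  induction Φ with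
  | top => rfl
  | bot => rfl
  | state u t =>
    by_cases h : u = v
    · subst h
      simp only [DForm.cond, dif_pos rfl]
      by_cases hts : t = s
      · simp [hts, DForm.eval]
      · simp [hts, DForm.eval, Ne.symm hts]
    · simp [DForm.cond, h, DForm.eval, Function.update_of_ne h]
  | neg φ ih => simp [DForm.cond, DForm.eval, ih]
  | conj φ ψ ih1 ih2 => simp [DForm.cond, DForm.eval, ih1, ih2]
  | disj φ ψ ih1 ih2 => simp [DForm.cond, DForm.eval, ih1, ih2]

theorem eval_listConj [∀ v, DecidableEq (σ v)] (L : List (DForm V σ)) (w : ∀ u, σ u) :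
    (listConj L).eval w = true ↔ ∀ φ ∈ L, φ.eval w = true := by
  induction L with
  | nil => simp [listConj, DForm.eval]
  | cons φ l ih => simp [listConj, DForm.eval, ih]

theorem eval_stateDisj [∀ v, DecidableEq (σ v)] (v : V) (l : List (σ v)) (w : ∀ u, σ u) :
    (stateDisj v l).eval w = true ↔ w v ∈ l := by
  induction l with
  | nil => simp [stateDisj, DForm.eval]
  | cons s l ih => simp [stateDisj, DForm.eval, ih]

theorem eval_quant [DecidableEq V] [∀ v, DecidableEq (σ v)] [∀ v, Fintype (σ v)]
    (v : V) (s : σ v) (Δ : DForm V σ) (w : ∀ u, σ u) :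
    (DForm.quant v s Δ).eval w = true ↔
      ∀ t : σ v, (w v = s → t = s) → Δ.eval (Function.update w v t) = true := by
  have hfold : ∀ M : List (σ v),
      ((M.foldr (fun j acc => DForm.conj (DForm.disj (DForm.state v s) (Δ.cond v j)) acc)
          (Δ.cond v s)).eval w = true ↔
        ((Δ.cond v s).eval w = true ∧
          ∀ j ∈ M, w v = s ∨ (Δ.cond v j).eval w = true)) := by
    intro M
    induction M with
    | nil => simp
    | cons a M ih =>
      simp only [List.foldr_cons, DForm.eval, Bool.and_eq_true, Bool.or_eq_true, ih,
        List.mem_cons, decide_eq_true_iff]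
      constructor
      · rintro ⟨h1, h2, h3⟩
        exact ⟨h2, fun j hj => hj.elim (fun h => h ▸ h1) (h3 j)⟩
      · rintro ⟨h1, h2⟩
        exact ⟨h2 a (Or.inl rfl), h1, fun j hj => h2 j (Or.inr hj)⟩
  rw [DForm.quant, hfold]
  simp only [Finset.mem_toList, Finset.mem_filter, Finset.mem_univ, true_and, eval_cond]
  constructor
  · rintro ⟨h1, h2⟩ t ht
    by_cases hts : t = s
    · subst hts; exact h1
    · rcases h2 t hts with hws | h
      · exact absurd (ht hws) hts
      · exact h
  · intro h
    refine ⟨h s (fun _ => rfl), fun j hj => ?_⟩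
    by_cases hws : w v = s
    · exact Or.inl hws
    · exact Or.inr (h j (fun hw => absurd hw hws))

theorem eval_foldQ [DecidableEq V] [∀ v, DecidableEq (σ v)] [∀ v, Fintype (σ v)]
    (δ : ∀ u, σ u) (L : List V) (Δ : DForm V σ) (w : ∀ u, σ u) :
    ((L.foldr (fun v acc => DForm.quant v (δ v) acc) Δ).eval w = true) ↔
      ∀ w' : ∀ u, σ u, (∀ v, w' v = w v ∨ (v ∈ L ∧ w v ≠ δ v)) → Δ.eval w' = true := by
  induction L generalizing w with
  | nil =>
    simp only [List.foldr_nil, List.not_mem_nil, false_and, or_false]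
    constructor
    · intro h w' hw'
      have : w' = w := funext hw'
      rwa [this]
    · intro h; exact h w (fun v => rfl)
  | cons v L ih =>
    simp only [List.foldr_cons]
    rw [eval_quant]
    constructor
    · intro h w' hw'
      have hv : w v = δ v → w' v = δ v := by
        intro hwv
        rcases hw' v with h1 | ⟨_, h2⟩
        · rw [h1, hwv]
        · exact absurd hwv h2
      refine (ih (Function.update w v (w' v))).mp (h (w' v) hv) w' (fun u => ?_)
      by_cases huv : u = v
      · subst huv; left; rw [Function.update_self]
      · rw [Function.update_of_ne huv]
        rcases hw' u with h1 | ⟨hm, h2⟩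
        · exact Or.inl h1
        · exact Or.inr ⟨(List.mem_cons.mp hm).resolve_left huv, h2⟩
    · intro h t ht
      rw [ih]
      intro w' hw'
      apply h w'
      intro u
      by_cases huv : u = v
      · subst huv
        rcases hw' u with h1 | ⟨_, h2⟩
        · rw [Function.update_self] at h1
          by_cases hwv : w u = δ u
          · left; rw [h1, ht hwv, ← hwv]
          · exact Or.inr ⟨List.mem_cons_self (a := u) (l := L), hwv⟩
        · rw [Function.update_self] at h2
          by_cases hwv : w u = δ u
          · exact absurd (ht hwv) h2
          · exact Or.inr ⟨List.mem_cons_self (a := u) (l := L), hwv⟩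
      · rcases hw' u with h1 | ⟨hm, h2⟩
        · rw [Function.update_of_ne huv] at h1; exact Or.inl h1
        · rw [Function.update_of_ne huv] at h2
          exact Or.inr ⟨List.mem_cons_of_mem v hm, h2⟩

theorem find?_eq_some_of_mem {α : Type*} [DecidableEq α] {n : ℕ} (sets : Fin n → Finset α)
    (hdisj : ∀ j k, j ≠ k → Disjoint (sets j) (sets k)) {x : α} {m : Fin n}
    (hm : x ∈ sets m) :
    (List.finRange n).find? (fun j => decide (x ∈ sets j)) = some m := by
  cases h : (List.finRange n).find? (fun j => decide (x ∈ sets j)) with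
  | none =>
    have := List.find?_eq_none.mp h m (List.mem_finRange m)
    simp at this
    exact absurd hm this
  | some j =>
    have hj := List.find?_some h
    simp only [decide_eq_true_eq] at hj
    by_cases hjm : j = m
    · rw [hjm]
    · exact absurd hm (Finset.disjoint_left.mp (hdisj j m hjm) hj)

theorem eval_deltaNNF [DecidableEq C] [DecidableEq V] [∀ v, DecidableEq (σ v)]
    [∀ v, Fintype (σ v)] (c : C) (T : DGraph V σ C) :
    ∀ (avail : ∀ u : V, Finset (σ u)), T.WTO avail →
      ∀ w : ∀ u, σ u,
        ((T.deltaNNF c).eval w = true ↔ ∀ c', T.classify w = some c' → c' = c) := by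
  induction T with
  | leaf c' =>
    intro avail _ w
    by_cases h : c' = c <;> simp [DGraph.deltaNNF, DGraph.classify, h, DForm.eval]
  | node v n sets ch ih =>
    intro avail hW w
    obtain ⟨hn, hne, hdisj, hpart, hch⟩ := hW
    have hL : (DGraph.deltaNNF c (DGraph.node v n sets ch)).eval w = true ↔
        ∀ j : Fin n, ((ch j).deltaNNF c).eval w = true ∨ w v ∉ sets j := by
      rw [DGraph.deltaNNF, eval_listConj]
      constructor
      · intro h j
        have := h _ (List.mem_map.mpr ⟨j, List.mem_finRange j, rfl⟩)
        simp only [DForm.eval, Bool.or_eq_true, eval_stateDisj, Finset.mem_toList,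
          Finset.mem_compl] at this
        exact this
      · intro h φ hφ
        obtain ⟨j, _, rfl⟩ := List.mem_map.mp hφ
        simp only [DForm.eval, Bool.or_eq_true, eval_stateDisj, Finset.mem_toList,
          Finset.mem_compl]
        exact h j
    rw [hL]
    by_cases hx : ∃ m, w v ∈ sets m
    · obtain ⟨m, hm⟩ := hx
      have hcl : (DGraph.node v n sets ch).classify w = (ch m).classify w := by
        rw [DGraph.classify, find?_eq_some_of_mem sets hdisj hm]
      rw [hcl]
      rw [← ih m (Function.update avail v (sets m)) (hch m) w]
      constructor
      · intro h
        exact (h m).resolve_right (fun h' => h' hm)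
      · intro h j
        by_cases hjm : j = m
        · subst hjm; exact Or.inl h
        · exact Or.inr (fun h' => Finset.disjoint_left.mp (hdisj j m hjm) h' hm)
    · have hcl : (DGraph.node v n sets ch).classify w = none := by
        rw [DGraph.classify]
        have : (List.finRange n).find? (fun j => decide (w v ∈ sets j)) = none := by
          rw [List.find?_eq_none]
          intro j _
          simp only [decide_eq_true_eq]
          exact fun hj => hx ⟨j, hj⟩
        rw [this]
      rw [hcl]
      constructor
      · intro _ c' hcl'
        cases hcl'
      · intro _ j
        exact Or.inr (fun hj => hx ⟨j, hj⟩)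

theorem classify_irrel [DecidableEq V] [∀ v, DecidableEq (σ v)]
    (T : DGraph V σ C) :
    ∀ (avail : ∀ u : V, Finset (σ u)), T.WTO avail →
      ∀ (v : V) (w : ∀ u, σ u), w v ∉ avail v →
        T.classify w = none ∨
          ∀ s : σ v, T.classify (Function.update w v s) = T.classify w := by
  induction T with
  | leaf c => intro avail _ v w _; exact Or.inr (fun s => rfl)
  | node u n sets ch ih =>
    intro avail hW v w hw
    obtain ⟨hn, hne, hdisj, hpart, hch⟩ := hW
    by_cases huv : u = v
    · subst huv
      left
      rw [DGraph.classify]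
      have : (List.finRange n).find? (fun j => decide (w u ∈ sets j)) = none := by
        rw [List.find?_eq_none]
        intro j _
        simp only [decide_eq_true_eq]
        exact fun hj => hw ((hpart (w u)).mpr ⟨j, hj⟩)
      rw [this]
    · cases hfind : (List.finRange n).find? (fun j => decide (w u ∈ sets j)) with
      | none =>
        left
        rw [DGraph.classify, hfind]
      | some j =>
        have hcl : (DGraph.node u n sets ch).classify w = (ch j).classify w := by
          rw [DGraph.classify, hfind]
        have hw' : w v ∉ Function.update avail u (sets j) v := by
          rw [Function.update_of_ne (Ne.symm huv)]; exact hw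
        rcases ih j (Function.update avail u (sets j)) (hch j) v w hw' with h | h
        · left; rw [hcl, h]
        · right
          intro s
          have hup : Function.update w v s u = w u := Function.update_of_ne huv s w
          have : (DGraph.node u n sets ch).classify (Function.update w v s) =
              (ch j).classify (Function.update w v s) := by
            rw [DGraph.classify, hup, hfind]
          rw [this, h s, hcl]

theorem eval_gammaNNF [DecidableEq C] [DecidableEq V] [∀ v, DecidableEq (σ v)]
    [∀ v, Fintype (σ v)] (δ : ∀ u, σ u) (c : C) (w : ∀ u, σ u) (T : DGraph V σ C) :
    ∀ (avail : ∀ u : V, Finset (σ u)), T.WTO avail →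
      (∀ u, w u = δ u → δ u ∈ avail u) →
      ((T.gammaNNF δ c).eval w = true ↔
        ∀ w' : ∀ u, σ u, (∀ u, w u = δ u → w' u = δ u) →
          ∀ c', T.classify w' = some c' → c' = c) := by
  induction T with
  | leaf c' =>
    intro avail _ _
    by_cases h : c' = c
    · simp [DGraph.gammaNNF, DGraph.classify, h, DForm.eval]
    · simp only [DGraph.gammaNNF, if_neg h, DForm.eval, DGraph.classify]
      constructor
      · intro hF; exact absurd hF (by simp)
      · intro hR
        exact absurd (hR w (fun u hu => hu) c' rfl) h
  | node v n sets ch ih =>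
    intro avail hW hw
    obtain ⟨hn, hne, hdisj, hpart, hch⟩ := hW
    have hterm : ∀ j : Fin n,
        (DForm.disj ((ch j).gammaNNF δ c)
          (if ∃ k, k ≠ j ∧ δ v ∈ sets k then DForm.state v (δ v) else DForm.bot)).eval w
          = true ↔
        (((ch j).gammaNNF δ c).eval w = true ∨
          ((∃ k, k ≠ j ∧ δ v ∈ sets k) ∧ w v = δ v)) := by
      intro j
      by_cases hP : ∃ k, k ≠ j ∧ δ v ∈ sets k
      · simp [hP, DForm.eval]
      · simp [hP, DForm.eval]
    have hL : (DGraph.gammaNNF δ c (DGraph.node v n sets ch)).eval w = true ↔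
        ∀ j : Fin n, (((ch j).gammaNNF δ c).eval w = true ∨
          ((∃ k, k ≠ j ∧ δ v ∈ sets k) ∧ w v = δ v)) := by
      rw [DGraph.gammaNNF, eval_listConj]
      constructor
      · intro h j
        exact (hterm j).mp (h _ (List.mem_map.mpr ⟨j, List.mem_finRange j, rfl⟩))
      · intro h φ hφ
        obtain ⟨j, _, rfl⟩ := List.mem_map.mp hφ
        exact (hterm j).mpr (h j)
    rw [hL]
    by_cases hv : w v = δ v
    · -- on-path case: δ v is in some set
      obtain ⟨i, hi⟩ := (hpart (δ v)).mp (hw v hv)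
      have hLi : (∀ j : Fin n, (((ch j).gammaNNF δ c).eval w = true ∨
          ((∃ k, k ≠ j ∧ δ v ∈ sets k) ∧ w v = δ v))) ↔
          ((ch i).gammaNNF δ c).eval w = true := by
        constructor
        · intro h
          rcases h i with h' | ⟨⟨k, hk, hk2⟩, _⟩
          · exact h'
          · exact absurd hi (Finset.disjoint_left.mp (hdisj k i hk) hk2)
        · intro h j
          by_cases hj : j = i
          · subst hj; exact Or.inl h
          · exact Or.inr ⟨⟨i, fun h' => hj h'.symm, hi⟩, hv⟩
      rw [hLi]
      have hcond : ∀ u, w u = δ u → δ u ∈ Function.update avail v (sets i) u := by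
        intro u hu
        by_cases huv : u = v
        · subst huv; rw [Function.update_self]; exact hi
        · rw [Function.update_of_ne huv]; exact hw u hu
      rw [ih i (Function.update avail v (sets i)) (hch i) hcond]
      have hclass : ∀ w' : ∀ u, σ u, (∀ u, w u = δ u → w' u = δ u) →
          (DGraph.node v n sets ch).classify w' = (ch i).classify w' := by
        intro w' hag
        have hv' : w' v = δ v := hag v hv
        rw [DGraph.classify, find?_eq_some_of_mem sets hdisj (by rw [hv']; exact hi)]
      constructor
      · intro h w' hag c' hcl
        rw [hclass w' hag] at hcl
        exact h w' hag c' hcl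
      · intro h w' hag c' hcl
        exact h w' hag c' (by rw [hclass w' hag]; exact hcl)
    · -- off-path case: w v ≠ δ v
      have hL2 : (∀ j : Fin n, (((ch j).gammaNNF δ c).eval w = true ∨
          ((∃ k, k ≠ j ∧ δ v ∈ sets k) ∧ w v = δ v))) ↔
          ∀ j : Fin n, ((ch j).gammaNNF δ c).eval w = true := by
        constructor
        · intro h j
          exact (h j).resolve_right (fun h' => hv h'.2)
        · intro h j; exact Or.inl (h j)
      rw [hL2]
      have hcond : ∀ j : Fin n, ∀ u, w u = δ u → δ u ∈ Function.update avail v (sets j) u := by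
        intro j u hu
        by_cases huv : u = v
        · subst huv; exact absurd hu hv
        · rw [Function.update_of_ne huv]; exact hw u hu
      have hIH : ∀ j : Fin n, (((ch j).gammaNNF δ c).eval w = true ↔
          ∀ w' : ∀ u, σ u, (∀ u, w u = δ u → w' u = δ u) →
            ∀ c', (ch j).classify w' = some c' → c' = c) :=
        fun j => ih j (Function.update avail v (sets j)) (hch j) (hcond j)
      constructor
      · intro h w' hag c' hcl
        rw [DGraph.classify] at hcl
        cases hfind : (List.finRange n).find? (fun j => decide (w' v ∈ sets j)) with
        | none => rw [hfind] at hcl; cases hcl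
        | some m =>
          rw [hfind] at hcl
          exact (hIH m).mp (h m) w' hag c' hcl
      · intro h j
        rw [hIH j]
        intro w' hag c' hcl
        by_cases hin : w' v ∈ sets j
        · have : (DGraph.node v n sets ch).classify w' = (ch j).classify w' := by
            rw [DGraph.classify, find?_eq_some_of_mem sets hdisj hin]
          exact h w' hag c' (by rw [this]; exact hcl)
        · have hnotav : w' v ∉ Function.update avail v (sets j) v := by
            rw [Function.update_self]; exact hin
          rcases classify_irrel (ch j) (Function.update avail v (sets j)) (hch j) v w'
              hnotav with hnone | hupd
          · rw [hnone] at hcl; cases hcl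
          · obtain ⟨s, hs⟩ := hne j
            have hag'' : ∀ u, w u = δ u → Function.update w' v s u = δ u := by
              intro u hu
              by_cases huv : u = v
              · subst huv; exact absurd hu hv
              · rw [Function.update_of_ne huv]; exact hag u hu
            have hcls : (DGraph.node v n sets ch).classify (Function.update w' v s) =
                (ch j).classify (Function.update w' v s) := by
              rw [DGraph.classify,
                find?_eq_some_of_mem sets hdisj (by rw [Function.update_self]; exact hs)]
            refine h (Function.update w' v s) hag'' c' ?_
            rw [hcls, hupd s]
            exact hcl

end Aux

/-- Closed form for the complete reason of a decision graph: `∀δ·Δ^c[T] ≡ Γ^c[T]`. -/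
theorem completeReason_eq_gammaNNF {C : Type} [DecidableEq V] [Fintype V] [DecidableEq C]
    [∀ v, DecidableEq (σ v)] [∀ v, Fintype (σ v)]
    (T : DGraph V σ C) (hT : T.WTO (fun _ => Finset.univ))
    (δ : ∀ u, σ u) (c : C) (hc : T.classify δ = some c) :
    DForm.equiv (completeReason δ (T.deltaNNF c)) (T.gammaNNF δ c) := by
  intro w
  have h1 := eval_foldQ δ (Finset.univ : Finset V).toList (T.deltaNNF c) w
  have h2 := eval_gammaNNF δ c w T (fun _ => Finset.univ) hT (by simp)
  have hconv : ∀ w' : ∀ u, σ u,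
      (∀ v, w' v = w v ∨ (v ∈ (Finset.univ : Finset V).toList ∧ w v ≠ δ v)) ↔
      (∀ v, w v = δ v → w' v = δ v) := by
    intro w'
    constructor
    · intro h v hv
      rcases h v with h' | ⟨_, h''⟩
      · rw [h', hv]
      · exact absurd hv h''
    · intro h v
      by_cases hv : w v = δ v
      · left; rw [h v hv, ← hv]
      · exact Or.inr ⟨by simp, hv⟩
  have key : (completeReason δ (T.deltaNNF c)).eval w = true ↔
      (T.gammaNNF δ c).eval w = true := by
    rw [completeReason, h1, h2]
    constructor
    · intro h w' hag c' hcl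
      have hd := h w' ((hconv w').mpr hag)
      exact (eval_deltaNNF c T (fun _ => Finset.univ) hT w').mp hd c' hcl
    · intro h w' hcond
      exact (eval_deltaNNF c T (fun _ => Finset.univ) hT w').mpr
        (h w' ((hconv w').mp hcond))
  cases hA : (completeReason δ (T.deltaNNF c)).eval w <;>
    cases hB : (T.gammaNNF δ c).eval w <;> simp_all
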